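/- Let n ≥ 1 and let A : ℝ → Mₙ(ℝ) be continuously differentiable on [0,1]. Suppose that for every continuous f : [0,1] → ℝⁿ with ∫₀¹ f(s) ds = 0 and every u ∈ [0,1] one has (A'(u))ᵀ · (∫ᵤ¹ f(s) ds) = ( A(u)ᵀ + A(u) ) · f(u) (as vectors in ℝⁿ). Then A is constant on [0,1] and A(u)ᵀ = −A(u) for every u ∈ [0,1]. -/

import Mathlib

open MeasureTheory Set


lemma aux_int_apply {n : ℕ} {f : ℝ → Fin n → ℝ} {a b : ℝ}
    (hf : IntervalIntegrable f volume a b) (j : Fin n) :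
    (∫ s in a..b, f s) j = ∫ s in a..b, f s j :=
  ((ContinuousLinearMap.proj (R := ℝ) (φ := fun _ : Fin n => ℝ) j).intervalIntegral_comp_comm hf).symm

lemma aux_zero_on_Icc {φ : ℝ → ℝ} (hφ : ContinuousOn φ (Icc 0 1))
    (h : ∀ u ∈ Ioo (0:ℝ) 1, φ u = 0) : ∀ u ∈ Icc (0:ℝ) 1, φ u = 0 := by
  intro u hu
  have hcl : u ∈ closure (Ioo (0:ℝ) 1) := by
    rwa [closure_Ioo (by norm_num : (0:ℝ) ≠ 1)]
  have hne : (nhdsWithin u (Ioo (0:ℝ) 1)).NeBot :=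
    mem_closure_iff_nhdsWithin_neBot.mp hcl
  have h1 : Filter.Tendsto φ (nhdsWithin u (Ioo (0:ℝ) 1)) (nhds (φ u)) :=
    ((hφ u hu).mono Ioo_subset_Icc_self).tendsto
  have h2 : Filter.Tendsto φ (nhdsWithin u (Ioo (0:ℝ) 1)) (nhds 0) := by
    refine Filter.Tendsto.congr' ?_ tendsto_const_nhds
    filter_upwards [self_mem_nhdsWithin] with x hx
    exact (h x hx).symm
  exact tendsto_nhds_unique h1 h2

/-- The analytic core of the paper's converse implication: if `A : [0,1] → Mₙ(ℝ)` is
continuously differentiable (with derivative `A'`) and for every continuous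
`f : [0,1] → ℝⁿ` with `∫₀¹ f = 0` one has `(A'(u))ᵀ·(∫ᵤ¹ f) = (A(u)ᵀ + A(u))·f(u)`
for all `u ∈ [0,1]`, then `A` is constant on `[0,1]` and skew-symmetric. -/
theorem constant_and_skew_of_orthogonality
    (n : ℕ) (hn : 1 ≤ n)
    (A A' : ℝ → Fin n → Fin n → ℝ)
    (hA' : ContinuousOn A' (Icc 0 1))
    (hderiv : ∀ u ∈ Icc (0:ℝ) 1, ∀ i j,
      HasDerivWithinAt (fun t => A t i j) (A' u i j) (Icc 0 1) u)
    (h : ∀ f : ℝ → Fin n → ℝ, ContinuousOn f (Icc 0 1) →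
      (∫ s in (0:ℝ)..(1:ℝ), f s) = 0 →
      ∀ u ∈ Icc (0:ℝ) 1, ∀ i,
        (∑ j, A' u j i * (∫ s in u..(1:ℝ), f s) j) =
          ∑ j, (A u j i + A u i j) * f u j) :
    (∀ u ∈ Icc (0:ℝ) 1, ∀ v ∈ Icc (0:ℝ) 1, A u = A v) ∧
      (∀ u ∈ Icc (0:ℝ) 1, ∀ i j, A u j i = - A u i j) := by
  -- the key scalar identity for test functions of the form f s j = if j = j₀ then g s else 0
  have key : ∀ g : ℝ → ℝ, Continuous g → (∫ s in (0:ℝ)..(1:ℝ), g s) = 0 →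
      ∀ u ∈ Icc (0:ℝ) 1, ∀ i j₀ : Fin n,
      A' u j₀ i * (∫ s in u..(1:ℝ), g s) = (A u j₀ i + A u i j₀) * g u := by
    intro g hg hg0 u hu i j₀
    set f : ℝ → Fin n → ℝ := fun s j => if j = j₀ then g s else 0 with hf
    have hfc : Continuous f := by
      apply continuous_pi
      intro j
      by_cases hj : j = j₀ <;> simp [hf, hj] <;> [exact hg; exact continuous_const]
    have hint : ∀ a b : ℝ, ∀ j, (∫ s in a..b, f s) j = if j = j₀ then (∫ s in a..b, g s) else 0 := by
      intro a b j
      rw [aux_int_apply (hfc.intervalIntegrable a b) j]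
      by_cases hj : j = j₀ <;> simp [hf, hj]
    have hz : (∫ s in (0:ℝ)..(1:ℝ), f s) = 0 := by
      funext j
      rw [hint]
      by_cases hj : j = j₀ <;> simp [hj, hg0]
    have := h f hfc.continuousOn hz u hu i
    simp only [hint] at this
    simpa [hf, mul_ite, Finset.sum_ite_eq'] using this
  -- two concrete test functions
  have hg1 : Continuous (fun s : ℝ => s - 1/2) := by continuity
  have hg2 : Continuous (fun s : ℝ => s^2 - 1/3) := by continuity
  have hg10 : (∫ s in (0:ℝ)..(1:ℝ), (s - 1/2)) = 0 := by
    rw [intervalIntegral.integral_sub intervalIntegral.intervalIntegrable_id intervalIntegrable_const]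
    simp [integral_id]
  have hg20 : (∫ s in (0:ℝ)..(1:ℝ), (s^2 - 1/3)) = 0 := by
    rw [intervalIntegral.integral_sub (intervalIntegral.intervalIntegrable_pow 2) intervalIntegrable_const]
    simp [integral_pow]
    norm_num
  have hint1 : ∀ u : ℝ, (∫ s in u..(1:ℝ), (s - 1/2)) = u*(1-u)/2 := by
    intro u
    rw [intervalIntegral.integral_sub intervalIntegral.intervalIntegrable_id intervalIntegrable_const]
    simp [integral_id]; ring
  have hint2 : ∀ u : ℝ, (∫ s in u..(1:ℝ), (s^2 - 1/3)) = (u - u^3)/3 := by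
    intro u
    rw [intervalIntegral.integral_sub (intervalIntegral.intervalIntegrable_pow 2) intervalIntegrable_const]
    simp [integral_pow]; ring
  have E1 : ∀ u ∈ Icc (0:ℝ) 1, ∀ i j : Fin n,
      A' u j i * (u*(1-u)/2) = (A u j i + A u i j) * (u - 1/2) := by
    intro u hu i j
    have := key _ hg1 hg10 u hu i j
    rwa [hint1] at this
  have E2 : ∀ u ∈ Icc (0:ℝ) 1, ∀ i j : Fin n,
      A' u j i * ((u - u^3)/3) = (A u j i + A u i j) * (u^2 - 1/3) := by
    intro u hu i j
    have := key _ hg2 hg20 u hu i j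
    rwa [hint2] at this
  -- A' vanishes on Icc
  have hA'z : ∀ u ∈ Icc (0:ℝ) 1, ∀ i j : Fin n, A' u i j = 0 := by
    intro u hu i j
    refine aux_zero_on_Icc (φ := fun v => A' v i j) ?_ ?_ u hu
    · exact ((continuous_apply j).comp (continuous_apply i)).comp_continuousOn hA'
    · intro v hv
      have hvIcc : v ∈ Icc (0:ℝ) 1 := Ioo_subset_Icc_self hv
      have e1 := E1 v hvIcc j i
      have e2 := E2 v hvIcc j i
      have hkey : A' v i j * (v^2 * (1-v)^2) = 0 := by
        linear_combination (-6*(v^2 - 1/3)) * e1 + (6*(v - 1/2)) * e2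
      have hv0 : v^2 * (1-v)^2 ≠ 0 := by
        have h1 : (0:ℝ) < v := hv.1
        have h2 : (0:ℝ) < 1 - v := by linarith [hv.2]
        positivity
      exact (mul_eq_zero.mp hkey).resolve_right hv0
  -- skew-symmetry statement in sum form
  have hskew : ∀ u ∈ Icc (0:ℝ) 1, ∀ i j : Fin n, A u j i + A u i j = 0 := by
    intro u hu i j
    by_cases hu2 : u = 1/2
    · subst hu2
      have e2 := E2 (1/2) hu i j
      rw [hA'z (1/2) hu j i] at e2
      norm_num at e2
      linarith
    · have e1 := E1 u hu i j
      rw [hA'z u hu j i] at e1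
      have : (A u j i + A u i j) * (u - 1/2) = 0 := by linarith [e1]
      have hne : u - 1/2 ≠ 0 := fun hc => hu2 (by linarith)
      exact (mul_eq_zero.mp this).resolve_right hne
  constructor
  · -- constancy
    intro u hu v hv
    funext i j
    have hcont : ContinuousOn (fun t => A t i j) (Icc 0 1) := fun x hx =>
      (hderiv x hx i j).continuousWithinAt
    have hder0 : ∀ x ∈ Ico (0:ℝ) 1, HasDerivWithinAt (fun t => A t i j) 0 (Ici x) x := by
      intro x hx
      have hxIcc : x ∈ Icc (0:ℝ) 1 := Ico_subset_Icc_self hx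
      have hd := hderiv x hxIcc i j
      rw [hA'z x hxIcc i j] at hd
      refine hd.mono_of_mem_nhdsWithin ?_
      exact Filter.mem_of_superset (Icc_mem_nhdsGE_of_mem ⟨le_refl x, hx.2⟩)
        (Icc_subset_Icc hxIcc.1 le_rfl)
    have hcst := constant_of_has_deriv_right_zero hcont hder0
    rw [hcst u hu, hcst v hv]
  · intro u hu i j
    have := hskew u hu i j
    linarith
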